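/- Let p = [b_1^{a_1} ⋯ b_r^{a_r}] (b_1 ≥ ⋯ ≥ b_r) be a symplectic partition of 2n in which every b_i is even. Then n* = 0, and with P := [p_1 p_1 1] one has the exact identity P^t = p^+; in particular (P^t)_{SO_{2n+1}} = (p^+)_{SO_{2n+1}}. -/

import Mathlib

namespace JiangWF

/-- `sCount p i` : the number of parts of `p` that are `≥ i`. -/
def sCount (p : Multiset ℕ) (i : ℕ) : ℕ := (p.filter (fun a => i ≤ a)).card

/-- `rCount p i` : the number of parts of `p` equal to `i`. -/
def rCount (p : Multiset ℕ) (i : ℕ) : ℕ := p.count i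

/-- The largest part of `p` (`0` for the empty partition). -/
def maxPart (p : Multiset ℕ) : ℕ := p.sup

/-- The smallest part of `p` (`0` for the empty partition). -/
noncomputable def minPart (p : Multiset ℕ) : ℕ := sInf {a : ℕ | a ∈ p}

/-- The transpose partition: its `i`-th part is `sCount p i`, for `1 ≤ i ≤ maxPart p`. -/
def transpose (p : Multiset ℕ) : Multiset ℕ :=
  (Multiset.range (maxPart p)).map fun i => sCount p (i + 1)

/-- The sum of the `m` largest parts of `p`. -/
def topSum (p : Multiset ℕ) (m : ℕ) : ℕ :=
  ∑ i ∈ Finset.Icc 1 p.sum, min m (sCount p i)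

/-- Dominance order: `domLE p q` means `p ≤ q`. -/
def domLE (p q : Multiset ℕ) : Prop := ∀ m, topSum p m ≤ topSum q m

/-- `p` is a partition of `N`: all parts positive, summing to `N`. -/
def IsPartitionOf (p : Multiset ℕ) (N : ℕ) : Prop := (∀ a ∈ p, 0 < a) ∧ p.sum = N

/-- Symplectic partition: every odd part occurs with even multiplicity. -/
def IsSymplectic (p : Multiset ℕ) : Prop := ∀ a, a % 2 = 1 → Even (p.count a)

/-- Orthogonal partition: every even part occurs with even multiplicity. -/
def IsOrthogonal (p : Multiset ℕ) : Prop := ∀ a, a % 2 = 0 → Even (p.count a)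

/-- `p^-`: decrease the smallest part by one (deleting it if it becomes `0`). -/
noncomputable def pMinus (p : Multiset ℕ) : Multiset ℕ :=
  if minPart p ≤ 1 then p.erase (minPart p)
  else (minPart p - 1) ::ₘ p.erase (minPart p)

/-- `p^+`: increase the largest part by one. -/
def pPlus (p : Multiset ℕ) : Multiset ℕ := (maxPart p + 1) ::ₘ p.erase (maxPart p)

/-- `p^{+-}`: increase the largest part by one and decrease the smallest by one. -/
noncomputable def pPM (p : Multiset ℕ) : Multiset ℕ := pMinus (pPlus p)

/-- `p₁ = [⌊b_1/2⌋^{a_1} ⋯ ⌊b_r/2⌋^{a_r}]^t` (discarding zero entries before transposing). -/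
def pOne (p : Multiset ℕ) : Multiset ℕ :=
  transpose ((p.map fun b => b / 2).filter fun x => 0 < x)

/-- `Σ_{i : b_i odd} a_i`: the number of odd parts of `p`. -/
def oddMult (p : Multiset ℕ) : ℕ := (p.filter fun a => a % 2 = 1).card

/-- `n* = ⌊(Σ_{i : b_i odd} a_i)/2⌋`. -/
def nStar (p : Multiset ℕ) : ℕ := oddMult p / 2

/-- Append an extra part `m` to `q`, omitted if `m = 0`. -/
def addPart (m : ℕ) (q : Multiset ℕ) : Multiset ℕ := if m = 0 then q else m ::ₘ q

/-- `c` is the `Sp`-collapse of `p`: the maximal symplectic partition `≤ p` in dominance. -/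
def IsSpCollapse (p c : Multiset ℕ) : Prop :=
  IsPartitionOf c p.sum ∧ IsSymplectic c ∧ domLE c p ∧
    ∀ c', IsPartitionOf c' p.sum → IsSymplectic c' → domLE c' p → domLE c' c

/-- `c` is the `SO`-collapse of `p`: the maximal orthogonal partition `≤ p` in dominance. -/
def IsSOCollapse (p c : Multiset ℕ) : Prop :=
  IsPartitionOf c p.sum ∧ IsOrthogonal c ∧ domLE c p ∧
    ∀ c', IsPartitionOf c' p.sum → IsOrthogonal c' → domLE c' p → domLE c' c

/-- `e` is the `Sp`-expansion of `p`: the minimal special symplectic partition `≥ p`. -/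
def IsSpExpansion (p e : Multiset ℕ) : Prop :=
  IsPartitionOf e p.sum ∧ IsSymplectic e ∧ IsSymplectic (transpose e) ∧ domLE p e ∧
    ∀ e', IsPartitionOf e' p.sum → IsSymplectic e' → IsSymplectic (transpose e') →
      domLE p e' → domLE e e'

/-- `e` is the `SO_{2n+1}`-expansion of `p`: the minimal special orthogonal partition `≥ p`
(odd case: special means the transpose is orthogonal). -/
def IsSOOddExpansion (p e : Multiset ℕ) : Prop :=
  IsPartitionOf e p.sum ∧ IsOrthogonal e ∧ IsOrthogonal (transpose e) ∧ domLE p e ∧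
    ∀ e', IsPartitionOf e' p.sum → IsOrthogonal e' → IsOrthogonal (transpose e') →
      domLE p e' → domLE e e'

/-- `e` is the `SO_{2n}`-expansion of `p`: the minimal special orthogonal partition `≥ p`
(even case: special means the transpose is symplectic). -/
def IsSOEvenExpansion (p e : Multiset ℕ) : Prop :=
  IsPartitionOf e p.sum ∧ IsOrthogonal e ∧ IsSymplectic (transpose e) ∧ domLE p e ∧
    ∀ e', IsPartitionOf e' p.sum → IsOrthogonal e' → IsSymplectic (transpose e') →
      domLE p e' → domLE e e'

/-- `dim_C(q)` for a symplectic partition `q` of `2k`: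
`2k² + k − (1/2)Σ s_i(q)² − (1/2)Σ_{i odd} r_i(q)` (note `2k² + k = (|q|² + |q|)/2`). -/
def dimC (p : Multiset ℕ) : ℚ :=
  ((p.sum : ℚ) ^ 2 + (p.sum : ℚ)) / 2
    - (∑ i ∈ Finset.Icc 1 p.sum, (sCount p i : ℚ) ^ 2) / 2
    - (∑ i ∈ Finset.Icc 1 p.sum, if i % 2 = 1 then (rCount p i : ℚ) else 0) / 2

/-- `dim_B(q)` for an orthogonal partition `q` of `2k+1`:
`2k² + k − (1/2)Σ s_i(q)² + (1/2)Σ_{i odd} r_i(q)` (note `2k² + k = (|q|² − |q|)/2`). -/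
def dimB (p : Multiset ℕ) : ℚ :=
  ((p.sum : ℚ) ^ 2 - (p.sum : ℚ)) / 2
    - (∑ i ∈ Finset.Icc 1 p.sum, (sCount p i : ℚ) ^ 2) / 2
    + (∑ i ∈ Finset.Icc 1 p.sum, if i % 2 = 1 then (rCount p i : ℚ) else 0) / 2

/-- `dim_D(q)` for an orthogonal partition `q` of `2k`:
`2k² − k − (1/2)Σ s_i(q)² + (1/2)Σ_{i odd} r_i(q)` (note `2k² − k = (|q|² − |q|)/2`). -/
def dimD (p : Multiset ℕ) : ℚ :=
  ((p.sum : ℚ) ^ 2 - (p.sum : ℚ)) / 2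
    - (∑ i ∈ Finset.Icc 1 p.sum, (sCount p i : ℚ) ^ 2) / 2
    + (∑ i ∈ Finset.Icc 1 p.sum, if i % 2 = 1 then (rCount p i : ℚ) else 0) / 2



/-! ### Auxiliary lemmas -/

lemma sCount_anti (p : Multiset ℕ) {i j : ℕ} (h : i ≤ j) : sCount p j ≤ sCount p i :=
  Multiset.card_le_card (Multiset.monotone_filter_right p (fun b hb => le_trans h hb))

lemma sCount_eq_zero (p : Multiset ℕ) {i : ℕ} (h : maxPart p < i) : sCount p i = 0 := by
  rw [sCount, Multiset.card_eq_zero, Multiset.filter_eq_nil]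
  intro a ha hia
  have : a ≤ maxPart p := Multiset.le_sup ha
  omega

lemma maxPart_mem (p : Multiset ℕ) (h : p ≠ 0) : maxPart p ∈ p := by
  induction p using Multiset.induction with
  | empty => exact absurd rfl h
  | cons a s ih =>
    rw [maxPart, Multiset.sup_cons]
    rcases eq_or_ne s 0 with rfl | hs
    · simp
    · rcases le_total a s.sup with h1 | h1
      · rw [sup_eq_right.mpr h1]; exact Multiset.mem_cons_of_mem (ih hs)
      · rw [sup_eq_left.mpr h1]; exact Multiset.mem_cons_self a s

lemma one_le_sCount (p : Multiset ℕ) {i : ℕ} (hi : 1 ≤ i) (h : i ≤ maxPart p) :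
    1 ≤ sCount p i := by
  have hne : p ≠ 0 := by
    rintro rfl
    rw [maxPart, Multiset.sup_zero] at h
    simp at h; omega
  have hm : maxPart p ∈ p.filter (fun a => i ≤ a) :=
    Multiset.mem_filter.mpr ⟨maxPart_mem p hne, h⟩
  exact Multiset.card_pos_iff_exists_mem.mpr ⟨_, hm⟩

lemma sCount_succ_add_count (p : Multiset ℕ) (a : ℕ) :
    sCount p a = p.count a + sCount p (a + 1) := by
  have key := Multiset.filter_add_filter (fun x => a = x) (fun x => a + 1 ≤ x) p
  have h1 : (p.filter fun x => a = x ∨ a + 1 ≤ x) = p.filter fun x => a ≤ x :=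
    Multiset.filter_congr (fun x _ => by omega)
  have h2 : (p.filter fun x => a = x ∧ a + 1 ≤ x) = 0 :=
    Multiset.filter_eq_nil.mpr (fun x _ hx => by omega)
  have hcard := congrArg Multiset.card key
  rw [Multiset.card_add, Multiset.card_add, h1, h2, Multiset.card_zero] at hcard
  rw [sCount, sCount, Multiset.count_eq_card_filter_eq]
  omega

lemma eq_of_sCount_eq (p q : Multiset ℕ) (hp : ∀ a ∈ p, 0 < a) (hq : ∀ a ∈ q, 0 < a)
    (h : ∀ i, 1 ≤ i → sCount p i = sCount q i) : p = q := by
  ext a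
  rcases Nat.eq_zero_or_pos a with rfl | ha
  · rw [Multiset.count_eq_zero_of_notMem (fun hm => by simpa using hp 0 hm),
      Multiset.count_eq_zero_of_notMem (fun hm => by simpa using hq 0 hm)]
  · have e1 := sCount_succ_add_count p a
    have e2 := sCount_succ_add_count q a
    have e3 := h a ha
    have e4 := h (a + 1) (by omega)
    omega

lemma nat_eq_of_le_iff {A B : ℕ} (h : ∀ i, 1 ≤ i → (i ≤ A ↔ i ≤ B)) : A = B := by
  rcases Nat.eq_zero_or_pos A with hA | hA
  · rcases Nat.eq_zero_or_pos B with hB | hB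
    · omega
    · have := (h B hB).mpr le_rfl; omega
  · have h1 := (h A hA).mp le_rfl
    exact le_antisymm h1 ((h B (le_trans hA h1)).mpr le_rfl)

lemma lt_card_filter_iff {P : ℕ → Prop} [DecidablePred P] {M : ℕ}
    (hd : ∀ i j, i ≤ j → P j → P i) (k : ℕ) :
    k < ((Finset.range M).filter P).card ↔ (k < M ∧ P k) := by
  constructor
  · intro hk
    have hcM : ((Finset.range M).filter P).card ≤ M := by
      have := Finset.card_filter_le (Finset.range M) P
      simpa using this
    refine ⟨lt_of_lt_of_le hk hcM, ?_⟩
    by_contra hPk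
    have hsub : (Finset.range M).filter P ⊆ Finset.range k := by
      intro j hj
      simp only [Finset.mem_filter, Finset.mem_range] at hj ⊢
      by_contra hjk
      exact hPk (hd k j (by omega) hj.2)
    have hle := Finset.card_le_card hsub
    rw [Finset.card_range] at hle
    omega
  · rintro ⟨hkM, hPk⟩
    have hsub : Finset.range (k + 1) ⊆ (Finset.range M).filter P := by
      intro j hj
      rw [Finset.mem_range] at hj
      exact Finset.mem_filter.mpr ⟨Finset.mem_range.mpr (by omega), hd j k (by omega) hPk⟩
    have hle := Finset.card_le_card hsub
    rw [Finset.card_range] at hle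
    omega

lemma le_card_filter_iff (p : Multiset ℕ) {M k i : ℕ} (hM : maxPart p ≤ M)
    (hk : 1 ≤ k) (hi : 1 ≤ i) :
    i ≤ ((Finset.range M).filter (fun j => k ≤ sCount p (j + 1))).card ↔ k ≤ sCount p i := by
  have hd : ∀ a b, a ≤ b → (k ≤ sCount p (b + 1)) → k ≤ sCount p (a + 1) :=
    fun a b hab h => le_trans h (sCount_anti p (by omega))
  have h := lt_card_filter_iff (M := M) hd (i - 1)
  have hi1 : i - 1 + 1 = i := by omega
  rw [hi1] at h
  constructor
  · intro hle; exact (h.mp (by omega)).2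
  · intro hks
    have hiM : i ≤ maxPart p := by
      by_contra hmax
      have := sCount_eq_zero p (i := i) (by omega)
      omega
    have := h.mpr ⟨by omega, hks⟩
    omega

lemma maxPart_le_sum (p : Multiset ℕ) : maxPart p ≤ p.sum :=
  Multiset.sup_le.mpr (fun a ha => Multiset.le_sum_of_mem ha)

lemma sCount_transpose_card (p : Multiset ℕ) (k : ℕ) :
    sCount (transpose p) k
      = ((Finset.range (maxPart p)).filter (fun j => k ≤ sCount p (j + 1))).card := by
  rw [sCount, transpose, ← Multiset.countP_eq_card_filter, Multiset.countP_map]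
  rfl

lemma le_sCount_transpose_iff (p : Multiset ℕ) {k i : ℕ} (hk : 1 ≤ k) (hi : 1 ≤ i) :
    i ≤ sCount (transpose p) k ↔ k ≤ sCount p i := by
  rw [sCount_transpose_card]
  exact le_card_filter_iff p le_rfl hk hi

lemma transpose_pos (p : Multiset ℕ) : ∀ a ∈ transpose p, 0 < a := by
  intro a ha
  rw [transpose] at ha
  obtain ⟨i, hi, rfl⟩ := Multiset.mem_map.mp ha
  rw [Multiset.mem_range] at hi
  exact one_le_sCount p (by omega) (by omega)

lemma sCount_transpose_transpose (p : Multiset ℕ) {i : ℕ} (hi : 1 ≤ i) :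
    sCount (transpose (transpose p)) i = sCount p i := by
  apply nat_eq_of_le_iff
  intro k hk
  rw [le_sCount_transpose_iff (transpose p) hi hk, le_sCount_transpose_iff p hk hi]

lemma transpose_transpose (p : Multiset ℕ) (hp : ∀ a ∈ p, 0 < a) :
    transpose (transpose p) = p :=
  eq_of_sCount_eq _ _ (transpose_pos _) hp (fun _ hi => sCount_transpose_transpose p hi)

lemma sCount_cons (a : ℕ) (s : Multiset ℕ) (i : ℕ) :
    sCount (a ::ₘ s) i = (if i ≤ a then 1 else 0) + sCount s i := by
  rw [sCount, sCount, Multiset.filter_cons, Multiset.card_add, apply_ite Multiset.card]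
  simp

lemma transpose_pPlus (p : Multiset ℕ) : transpose (pPlus p) = 1 ::ₘ transpose p := by
  have herase : ∀ a ∈ p.erase (maxPart p), a ≤ maxPart p :=
    fun a ha => Multiset.le_sup (Multiset.mem_of_mem_erase ha)
  have hmax : maxPart (pPlus p) = maxPart p + 1 := by
    rw [pPlus, maxPart, Multiset.sup_cons]
    have h1 : Multiset.sup (p.erase (maxPart p)) ≤ maxPart p := Multiset.sup_le.mpr herase
    exact sup_eq_left.mpr (by omega)
  rw [transpose, hmax, Multiset.range_succ, Multiset.map_cons]
  congr 1
  · show sCount (pPlus p) (maxPart p + 1) = 1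
    rw [pPlus, sCount_cons]
    have h0 : sCount (p.erase (maxPart p)) (maxPart p + 1) = 0 := by
      rw [sCount, Multiset.card_eq_zero, Multiset.filter_eq_nil]
      intro a ha hle
      have := herase a ha; omega
    simp [h0]
  · rw [transpose]
    apply Multiset.map_congr rfl
    intro i hi
    rw [Multiset.mem_range] at hi
    have hne : p ≠ 0 := by
      rintro rfl
      rw [maxPart, Multiset.sup_zero] at hi
      simp at hi
    have hmem : maxPart p ∈ p := maxPart_mem p hne
    conv_rhs => rw [← Multiset.cons_erase hmem]
    rw [pPlus, sCount_cons, sCount_cons]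
    have h1 : i + 1 ≤ maxPart p + 1 := by omega
    have h2 : i + 1 ≤ maxPart p := by omega
    simp [h1, h2]

lemma map_range_double (h : ℕ → ℕ) (K : ℕ) :
    (Multiset.range (2 * K)).map (fun i => h (i / 2))
      = (Multiset.range K).map h + (Multiset.range K).map h := by
  induction K with
  | zero => simp
  | succ K ih =>
    have h2 : 2 * (K + 1) = (2 * K + 1) + 1 := by ring
    rw [h2, Multiset.range_succ, Multiset.range_succ, Multiset.map_cons, Multiset.map_cons, ih,
      Multiset.range_succ, Multiset.map_cons, Multiset.cons_add, Multiset.add_cons]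
    have e1 : (2 * K + 1) / 2 = K := by omega
    have e2 : (2 * K) / 2 = K := by omega
    simp only [e1, e2]

lemma sCount_map_double (q : Multiset ℕ) (j : ℕ) :
    sCount (q.map (fun b => 2 * b)) j = sCount q ((j + 1) / 2) := by
  rw [sCount, sCount, ← Multiset.countP_eq_card_filter, Multiset.countP_map]
  congr 1
  exact Multiset.filter_congr (fun a _ => by omega)

lemma maxPart_map_double (q : Multiset ℕ) :
    maxPart (q.map (fun b => 2 * b)) = 2 * maxPart q := by
  induction q using Multiset.induction with
  | empty => simp [maxPart]
  | cons a s ih =>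
    rw [Multiset.map_cons, maxPart, maxPart, Multiset.sup_cons, Multiset.sup_cons]
    have h1 : Multiset.sup (s.map (fun b => 2 * b)) = 2 * Multiset.sup s := ih
    rw [h1]
    omega

lemma transpose_map_double (q : Multiset ℕ) :
    transpose (q.map (fun b => 2 * b)) = transpose q + transpose q := by
  rw [transpose, maxPart_map_double]
  have hcong : ∀ i ∈ Multiset.range (2 * maxPart q),
      sCount (q.map (fun b => 2 * b)) (i + 1) = sCount q (i / 2 + 1) := by
    intro i _
    rw [sCount_map_double]
    congr 1
    omega
  rw [Multiset.map_congr rfl hcong]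
  exact map_range_double (fun i => sCount q (i + 1)) (maxPart q)

lemma Icc_filter_card_eq (S : ℕ) (P : ℕ → Prop) [DecidablePred P] :
    ((Finset.Icc 1 S).filter P).card
      = ((Finset.range S).filter (fun j => P (j + 1))).card := by
  have himg : Finset.Icc 1 S = (Finset.range S).image (· + 1) := by
    ext x
    simp only [Finset.mem_Icc, Finset.mem_image, Finset.mem_range]
    constructor
    · intro hx; exact ⟨x - 1, by omega, by omega⟩
    · rintro ⟨y, hy, rfl⟩; omega
  rw [himg, Finset.filter_image, Finset.card_image_of_injective _ (fun a b hab => by omega)]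

lemma topSum_succ (p : Multiset ℕ) (m : ℕ) :
    topSum p (m + 1)
      = topSum p m + ((Finset.range p.sum).filter (fun j => m + 1 ≤ sCount p (j + 1))).card := by
  have hI := Icc_filter_card_eq p.sum (fun i => m + 1 ≤ sCount p i)
  rw [topSum, topSum, ← hI, Finset.card_filter, ← Finset.sum_add_distrib]
  apply Finset.sum_congr rfl
  intro i _
  split_ifs with h <;> omega

lemma domLE_antisymm (p q : Multiset ℕ) (hp : ∀ a ∈ p, 0 < a) (hq : ∀ a ∈ q, 0 < a)
    (hsum : p.sum = q.sum) (h1 : domLE p q) (h2 : domLE q p) : p = q := by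
  have heq : ∀ m, topSum p m = topSum q m := fun m => le_antisymm (h1 m) (h2 m)
  have hcard : ∀ m, ((Finset.range p.sum).filter (fun j => m + 1 ≤ sCount p (j + 1))).card
      = ((Finset.range q.sum).filter (fun j => m + 1 ≤ sCount q (j + 1))).card := by
    intro m
    have e1 := topSum_succ p m
    have e2 := topSum_succ q m
    have e3 := heq m
    have e4 := heq (m + 1)
    omega
  apply eq_of_sCount_eq p q hp hq
  intro i hi
  apply nat_eq_of_le_iff
  intro k hk
  rw [← le_card_filter_iff p (maxPart_le_sum p) hk hi,
    ← le_card_filter_iff q (maxPart_le_sum q) hk hi]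
  obtain ⟨m, rfl⟩ : ∃ m, k = m + 1 := ⟨k - 1, by omega⟩
  rw [hcard m]

/-- `p` a symplectic partition of `2n` all of whose parts are even.
Then `n* = 0` and `P = [p₁ p₁ 1]` satisfies `P^t = p^+`; in particular
`(P^t)_{SO_{2n+1}} = (p^+)_{SO_{2n+1}}`. -/
theorem transpose_eq_pPlus_of_even_parts (n : ℕ) (p : Multiset ℕ)
    (hp : IsPartitionOf p (2 * n)) (hsymp : IsSymplectic p)
    (heven : ∀ a ∈ p, a % 2 = 0) :
    nStar p = 0 ∧ transpose ((1 : ℕ) ::ₘ (pOne p + pOne p)) = pPlus p ∧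
      ∀ c₁ c₂ : Multiset ℕ,
        IsSOCollapse (transpose ((1 : ℕ) ::ₘ (pOne p + pOne p))) c₁ →
        IsSOCollapse (pPlus p) c₂ → c₁ = c₂ := by
  obtain ⟨hpos, hsum⟩ := hp
  have hfilter : (p.map fun b => b / 2).filter (fun x => 0 < x) = p.map fun b => b / 2 := by
    rw [Multiset.filter_eq_self]
    intro x hx
    obtain ⟨a, ha, rfl⟩ := Multiset.mem_map.mp hx
    have h1 := hpos a ha
    have h2 := heven a ha
    omega
  have hdouble : (p.map fun b => b / 2).map (fun b => 2 * b) = p := by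
    rw [Multiset.map_map]
    have : p.map ((fun b => 2 * b) ∘ fun b => b / 2) = p.map id := by
      apply Multiset.map_congr rfl
      intro a ha
      have h2 := heven a ha
      simp only [Function.comp_apply, id]
      omega
    rw [this, Multiset.map_id]
  have hppos : ∀ a ∈ pPlus p, 0 < a := by
    intro a ha
    rw [pPlus] at ha
    rcases Multiset.mem_cons.mp ha with rfl | hmem
    · omega
    · exact hpos a (Multiset.mem_of_mem_erase hmem)
  have h1 : (1 : ℕ) ::ₘ (pOne p + pOne p) = transpose (pPlus p) := by
    rw [pOne, hfilter, transpose_pPlus]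
    conv_rhs => rw [← hdouble]
    rw [transpose_map_double]
  have hmain : transpose ((1 : ℕ) ::ₘ (pOne p + pOne p)) = pPlus p := by
    rw [h1, transpose_transpose _ hppos]
  refine ⟨?_, hmain, ?_⟩
  · rw [nStar, oddMult]
    have hnil : p.filter (fun a => a % 2 = 1) = 0 :=
      Multiset.filter_eq_nil.mpr (fun a ha h => by have := heven a ha; omega)
    simp [hnil]
  · intro c₁ c₂ hc₁ hc₂
    rw [hmain] at hc₁
    obtain ⟨⟨hc1pos, hc1sum⟩, ho1, hdom1, hmax1⟩ := hc₁
    obtain ⟨⟨hc2pos, hc2sum⟩, ho2, hdom2, hmax2⟩ := hc₂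
    exact domLE_antisymm _ _ hc1pos hc2pos (by rw [hc1sum, hc2sum])
      (hmax2 c₁ ⟨hc1pos, hc1sum⟩ ho1 hdom1)
      (hmax1 c₂ ⟨hc2pos, hc2sum⟩ ho2 hdom2)


end JiangWF
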